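/- Suppose α < β are real numbers, B = 0, b ≠ 0, A is not positive semidefinite, and there exists ν ≥ 0 such that f(x) + ν·(h(x) − α)·(h(x) − β) ≥ 0 for all x ∈ ℝⁿ. Then the duality gap is infinite: f(x) ≥ 0 for every x ∈ ℝⁿ with α ≤ h(x) ≤ β, while for every μ ∈ ℝ the Lagrangian x ↦ f(x) + μ₋(h(x) − β) + μ₊(α − h(x)) is unbounded below on ℝⁿ. -/

import Mathlib

open Matrix

/-- The quadratic function `x ↦ xᵀ M x + 2 mᵀ x + r`. -/
noncomputable def qfun {n : ℕ} (M : Matrix (Fin n) (Fin n) ℝ) (m : Fin n → ℝ) (r : ℝ)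
    (x : Fin n → ℝ) : ℝ :=
  x ⬝ᵥ M *ᵥ x + 2 * (m ⬝ᵥ x) + r

/-- Infinite duality gap in the exceptional case: the primal objective is nonnegative on
the feasible set while every Lagrangian is unbounded below. -/
theorem infinite_duality_gap (n : ℕ) (hn : 0 < n)
    (A B : Matrix (Fin n) (Fin n) ℝ) (hA : A.IsSymm) (hB : B.IsSymm)
    (a b : Fin n → ℝ) (c d : ℝ) (α β : ℝ) (hαβ : α < β)
    (hB0 : B = 0) (hb : b ≠ 0) (hnpsd : ¬ A.PosSemidef)
    (hcert : ∃ ν : ℝ, 0 ≤ ν ∧ ∀ x : Fin n → ℝ,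
      qfun A a c x + ν * (qfun B b d x - α) * (qfun B b d x - β) ≥ 0) :
    (∀ x : Fin n → ℝ, α ≤ qfun B b d x → qfun B b d x ≤ β → qfun A a c x ≥ 0) ∧
      (∀ μ s : ℝ, ∃ x : Fin n → ℝ,
        qfun A a c x + (-(min μ 0)) * (qfun B b d x - β)
          + (max μ 0) * (α - qfun B b d x) < s) := by
  obtain ⟨ν, hν, hc⟩ := hcert
  constructor
  · intro x h1 h2
    have hx := hc x
    nlinarith [mul_nonneg (mul_nonneg hν (sub_nonneg.2 h1)) (sub_nonneg.2 h2)]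
  · intro μ s
    -- find u with uᵀ A u < 0
    have hu : ∃ u : Fin n → ℝ, u ⬝ᵥ A *ᵥ u < 0 := by
      by_contra h
      push_neg at h
      exact hnpsd (Matrix.PosSemidef.of_dotProduct_mulVec_nonneg hA fun x => by simpa using h x)
    obtain ⟨u, hu⟩ := hu
    set q : ℝ := u ⬝ᵥ A *ᵥ u with hq
    -- Lagrangian along t • u is q t² + L t + C
    set L : ℝ := 2 * (a ⬝ᵥ u) + (-(min μ 0)) * (2 * (b ⬝ᵥ u)) + (max μ 0) * (-(2 * (b ⬝ᵥ u))) with hL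
    set C : ℝ := c + (-(min μ 0)) * (d - β) + (max μ 0) * (α - d) with hC
    set t : ℝ := max 1 ((|L| + |C - s| + 1) / (-q)) with ht
    refine ⟨t • u, ?_⟩
    have hval : qfun A a c (t • u) + (-(min μ 0)) * (qfun B b d (t • u) - β)
        + (max μ 0) * (α - qfun B b d (t • u)) = q * t ^ 2 + L * t + C := by
      simp only [qfun, hB0, Matrix.zero_mulVec, Matrix.mulVec_smul, dotProduct_smul,
        smul_dotProduct, dotProduct_zero, smul_eq_mul, hq, hL, hC]
      ring
    rw [hval]
    have ht1 : 1 ≤ t := le_max_left _ _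
    have ht0 : 0 < t := lt_of_lt_of_le one_pos ht1
    have hqneg : 0 < -q := by linarith
    have ht2 : (|L| + |C - s| + 1) / (-q) ≤ t := le_max_right _ _
    have ht3 : |L| + |C - s| + 1 ≤ t * (-q) := by
      rw [div_le_iff₀ hqneg] at ht2; linarith
    have hL1 : L * t ≤ |L| * t := by
      exact mul_le_mul_of_nonneg_right (le_abs_self L) (le_of_lt ht0)
    have hC1 : C - s ≤ |C - s| := le_abs_self _
    have hCt : |C - s| ≤ |C - s| * t := le_mul_of_one_le_right (abs_nonneg _) ht1
    nlinarith [sq_nonneg t, mul_le_mul_of_nonneg_left ht3 (le_of_lt ht0)]
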